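/- Under an exponential dichotomy, any bounded continuous solution x of the integral equation with inhomogeneity y ∈ L^q satisfies Q(τ)x(τ) = −∫_τ^{∞} T(τ,t)_| Q(t)y(t) dt for every τ ∈ ℝ. -/

import Mathlib

open MeasureTheory Set Filter
open scoped ENNReal Topology

lemma famNorm_continuous {X : Type*} [NormedAddCommGroup X] (N : ℝ → X → ℝ) (C ε : ℝ)
    (hN₂ : ∀ t (u : X), N t u ≤ C * Real.exp (ε * |t|) * ‖u‖)
    (hNadd : ∀ t (u v : X), N t (u + v) ≤ N t u + N t v)
    (t : ℝ) : Continuous (N t) := by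
  have key : ∀ u v : X, N t u - N t v ≤ C * Real.exp (ε * |t|) * ‖u - v‖ := by
    intro u v
    have h1 : N t u ≤ N t v + N t (u - v) := by
      have := hNadd t v (u - v); simpa using this
    have := hN₂ t (u - v); linarith
  have hlip : LipschitzWith (Real.toNNReal (C * Real.exp (ε * |t|))) (N t) := by
    apply LipschitzWith.of_dist_le_mul
    intro u v
    rw [Real.dist_eq, dist_eq_norm]
    have h1 := key u v
    have h2 := key v u
    rw [norm_sub_rev v u] at h2
    have h3 : C * Real.exp (ε * |t|) ≤ ((C * Real.exp (ε * |t|)).toNNReal : ℝ) :=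
      Real.le_coe_toNNReal _
    have h4 : (0:ℝ) ≤ ((C * Real.exp (ε * |t|)).toNNReal : ℝ) := (C * Real.exp (ε * |t|)).toNNReal.coe_nonneg
    have h5 : C * Real.exp (ε * |t|) * ‖u - v‖ ≤
        ((C * Real.exp (ε * |t|)).toNNReal : ℝ) * ‖u - v‖ := by
      apply mul_le_mul_of_nonneg_right h3 (norm_nonneg _)
    rw [abs_sub_le_iff]
    constructor <;> linarith
  exact hlip.continuous

lemma famNorm_measurable_comp {X : Type*} [NormedAddCommGroup X] (N : ℝ → X → ℝ) (C ε : ℝ)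
    (hN₂ : ∀ t (u : X), N t u ≤ C * Real.exp (ε * |t|) * ‖u‖)
    (hNadd : ∀ t (u v : X), N t (u + v) ≤ N t u + N t v)
    (hNmeas : ∀ u : X, Measurable fun t => N t u)
    {f : ℝ → X} (hf : StronglyMeasurable f) : Measurable fun t => N t (f t) := by
  classical
  have hsimple : ∀ g : MeasureTheory.SimpleFunc ℝ X, Measurable fun t => N t (g t) := by
    intro g
    induction g using MeasureTheory.SimpleFunc.induction with
    | @const c s hs =>
      have : (fun t => N t ((SimpleFunc.piecewise s hs (SimpleFunc.const ℝ c)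
          (SimpleFunc.const ℝ 0)) t)) = s.piecewise (fun t => N t c) (fun t => N t 0) := by
        funext t
        by_cases ht : t ∈ s <;>
          simp [SimpleFunc.coe_piecewise, Set.piecewise, ht]
      rw [this]
      exact Measurable.piecewise hs (hNmeas c) (hNmeas 0)
    | @add f g hdisj hfm hgm =>
      have : (fun t => N t ((f + g) t)) =
          (⇑f ⁻¹' {0}).piecewise (fun t => N t (g t)) (fun t => N t (f t)) := by
        funext t
        by_cases ht : f t = 0
        · simp [Set.piecewise, ht]
        · have hg0 : g t = 0 := by
            by_contra hgt
            exact (Set.disjoint_left.mp hdisj (by simpa [Function.mem_support] using ht))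
              (by simpa [Function.mem_support] using hgt)
          simp [Set.piecewise, ht, hg0]
      rw [this]
      exact Measurable.piecewise (f.measurableSet_fiber 0) hgm hfm
  apply measurable_of_tendsto_metrizable (f := fun n t => N t (hf.approx n t)) (fun n => hsimple _)
  rw [tendsto_pi_nhds]
  intro t
  exact ((famNorm_continuous N C ε hN₂ hNadd t).continuousAt.tendsto).comp (hf.tendsto_approx t)

lemma evol_aestronglyMeasurable_comp {X : Type*} [NormedAddCommGroup X] [NormedSpace ℝ X]
    (T : ℝ → ℝ → X →L[ℝ] X)
    (hContB : ∀ τ (u : X), ContinuousOn (fun s => T τ s u) (Iic τ))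
    {y : ℝ → X} (hy : AEStronglyMeasurable y volume) (τ t : ℝ) (ht : τ ≤ t) :
    AEStronglyMeasurable (fun s => T t s (y s)) (volume.restrict (Ioc τ t)) := by
  classical
  set μ := volume.restrict (Ioc τ t) with hμ
  have hsimple : ∀ g : MeasureTheory.SimpleFunc ℝ X, AEStronglyMeasurable (fun s => T t s (g s)) μ := by
    intro g
    induction g using MeasureTheory.SimpleFunc.induction with
    | @const c s hs =>
      have : (fun u => T t u ((SimpleFunc.piecewise s hs (SimpleFunc.const ℝ c)
          (SimpleFunc.const ℝ 0)) u)) = s.indicator (fun u => T t u c) := by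
        funext u
        by_cases hu : u ∈ s <;>
          simp [SimpleFunc.coe_piecewise, Set.piecewise, Set.indicator, hu]
      rw [this]
      apply AEStronglyMeasurable.indicator _ hs
      exact ContinuousOn.aestronglyMeasurable
        ((hContB t c).mono (Ioc_subset_Iic_self.trans (Iic_subset_Iic.mpr le_rfl)))
        measurableSet_Ioc
    | @add f g hdisj hfm hgm =>
      have : (fun s => T t s ((f + g) s)) =
          fun s => T t s (f s) + T t s (g s) := by
        funext s; simp [map_add]
      rw [this]
      exact hfm.add hgm
  obtain ⟨z, hz, hyz⟩ := hy
  have hz' : AEStronglyMeasurable (fun s => T t s (z s)) μ := by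
    apply aestronglyMeasurable_of_tendsto_ae atTop (fun n => hsimple (hz.approx n))
    apply ae_of_all
    intro s
    exact ((T t s).continuous.continuousAt.tendsto).comp (hz.tendsto_approx s)
  apply hz'.congr
  filter_upwards [ae_restrict_of_ae (μ := volume) (s := Ioc τ t) hyz] with s hs
  rw [hs]



/-- The `L^p`-norm of a function `f : ℝ → X` with respect to a family of norms
`N t = ‖·‖_t` on `X` (ess sup when `p = ∞`). -/
noncomputable def famLpNorm {X : Type*} [NormedAddCommGroup X]
    (N : ℝ → X → ℝ) (p : ℝ≥0∞) (f : ℝ → X) : ℝ≥0∞ :=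
  if p = ∞ then essSup (fun t => ENNReal.ofReal (N t (f t))) volume
  else (∫⁻ t, ENNReal.ofReal (N t (f t)) ^ p.toReal) ^ (1 / p.toReal)

/-- Membership in `Y₁ = L^p ∩ C_b` with respect to the family of norms `N`. -/
def MemY1 {X : Type*} [NormedAddCommGroup X]
    (N : ℝ → X → ℝ) (p : ℝ≥0∞) (x : ℝ → X) : Prop :=
  Continuous x ∧ (∃ M, ∀ t, N t (x t) ≤ M) ∧ famLpNorm N p x < ∞

/-- Membership in `Y₂ = L^q` with respect to the family of norms `N`. -/
def MemY2 {X : Type*} [NormedAddCommGroup X]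
    (N : ℝ → X → ℝ) (q : ℝ≥0∞) (y : ℝ → X) : Prop :=
  AEStronglyMeasurable y volume ∧ famLpNorm N q y < ∞

/-- `x` solves the inhomogeneous integral equation
`x t = T t τ (x τ) + ∫_τ^t T t s (y s) ds` associated with the evolutionary family `T`. -/
def SolvesEq {X : Type*} [NormedAddCommGroup X] [NormedSpace ℝ X]
    (T : ℝ → ℝ → X →L[ℝ] X) (x y : ℝ → X) : Prop :=
  ∀ τ t, τ ≤ t → x t = T t τ (x τ) + ∫ s in Ioc τ t, T t s (y s)

/-- Exponential dichotomy of the evolutionary family `T` with respect to the family of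
norms `N`, with projections `P t`, inverse maps `S τ t` (the inverses of
`T t τ : Ker P τ → Ker P t`, applied after `Q t = I - P t`), and constants `a < 0 < b`,
`D > 0`. -/
def IsDichotomy {X : Type*} [NormedAddCommGroup X] [NormedSpace ℝ X]
    (T : ℝ → ℝ → X →L[ℝ] X) (N : ℝ → X → ℝ)
    (P : ℝ → X →L[ℝ] X) (S : ℝ → ℝ → X →L[ℝ] X) (a b D : ℝ) : Prop :=
  a < 0 ∧ 0 < b ∧ 0 < D ∧
  (∀ t, (P t).comp (P t) = P t) ∧
  (∀ τ t, τ ≤ t → (P t).comp (T t τ) = (T t τ).comp (P τ)) ∧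
  (∀ τ t, τ ≤ t → ∀ u, T t τ (S τ t (u - P t u)) = u - P t u) ∧
  (∀ τ t, τ ≤ t → ∀ u, S τ t (T t τ u - P t (T t τ u)) = u - P τ u) ∧
  (∀ τ t, τ ≤ t → ∀ u, P τ (S τ t (u - P t u)) = 0) ∧
  (∀ τ t u, τ ≤ t → N t (T t τ (P τ u)) ≤ D * Real.exp (a * (t - τ)) * N τ u) ∧
  (∀ τ t u, τ ≤ t → N τ (S τ t (u - P t u)) ≤ D * Real.exp (-b * (t - τ)) * N t u)

/-- Under an exponential dichotomy, any bounded continuous solution `x`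
of the integral equation with inhomogeneity `y ∈ L^q` satisfies
`Q τ (x τ) = -∫_τ^∞ T(τ,t)_| (Q t (y t)) dt` for every `τ`, where `Q t = I - P t`. -/
theorem unstable_part_of_bounded_solution
    {X : Type*} [NormedAddCommGroup X] [NormedSpace ℝ X] [CompleteSpace X]
    (T : ℝ → ℝ → X →L[ℝ] X) (N : ℝ → X → ℝ) (C ε K c : ℝ)
    (hN₁ : ∀ t u, ‖u‖ ≤ N t u)
    (hN₂ : ∀ t (u : X), N t u ≤ C * Real.exp (ε * |t|) * ‖u‖)
    (hNadd : ∀ t (u v : X), N t (u + v) ≤ N t u + N t v)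
    (hNsmul : ∀ t (r : ℝ) (u : X), N t (r • u) = |r| * N t u)
    (hNmeas : ∀ u : X, Measurable fun t => N t u)
    (hId : ∀ t, T t t = ContinuousLinearMap.id ℝ X)
    (hCoc : ∀ τ s t, τ ≤ s → s ≤ t → ∀ u, T t s (T s τ u) = T t τ u)
    (hCont : ∀ τ (u : X), ContinuousOn (fun t => T t τ u) (Ici τ))
    (hContB : ∀ τ (u : X), ContinuousOn (fun s => T τ s u) (Iic τ))
    (hBd : ∀ τ t (u : X), τ ≤ t → N t (T t τ u) ≤ K * Real.exp (c * (t - τ)) * N τ u)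
    (P : ℝ → X →L[ℝ] X) (S : ℝ → ℝ → X →L[ℝ] X) (a b D : ℝ)
    (hdich : IsDichotomy T N P S a b D)
    (q : ℝ≥0∞) (hq : 1 ≤ q)
    (y : ℝ → X) (hy : MemY2 N q y)
    (hmeas₂ : ∀ τ, AEStronglyMeasurable (fun t => S τ t (y t - P t (y t))) volume)
    (x : ℝ → X) (hxcont : Continuous x) (hxbdd : ∃ M, ∀ t, N t (x t) ≤ M)
    (hsol : SolvesEq T x y) :
    ∀ τ : ℝ, x τ - P τ (x τ) = -∫ t in Ioi τ, S τ t (y t - P t (y t)) := by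
  classical
  intro τ
  obtain ⟨haneg, hb, hD, hProj, hComm, hInv1, hInv2, hP0, hEst1, hEst2⟩ := hdich
  obtain ⟨hymeas, hyLq⟩ := hy
  obtain ⟨M, hM⟩ := hxbdd
  set F : ℝ → ℝ := fun t => N t (y t) with hFdef
  set g : ℝ → X := fun s => S τ s (y s - P s (y s)) with hgdef
  have hq0 : q ≠ 0 := (zero_lt_one.trans_le hq).ne'
  have hN0 : ∀ t u, 0 ≤ N t u := fun t u => (norm_nonneg _).trans (hN₁ t u)
  have hF0 : ∀ t, 0 ≤ F t := fun t => hN0 t (y t)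
  -- a.e. measurability of F
  have hFaesm : AEStronglyMeasurable F volume := by
    obtain ⟨z, hz, hyz⟩ := hymeas
    refine (famNorm_measurable_comp N C ε hN₂ hNadd hNmeas hz).aestronglyMeasurable.congr ?_
    filter_upwards [hyz] with t ht
    rw [hFdef]; simp only [ht]
  -- famLpNorm = eLpNorm
  have hFeq : famLpNorm N q y = eLpNorm F q volume := by
    unfold famLpNorm
    by_cases hqt : q = ∞
    · rw [if_pos hqt, hqt, eLpNorm_exponent_top, eLpNormEssSup]
      congr 1
      funext t
      exact (Real.enorm_eq_ofReal (hF0 t)).symm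
    · rw [if_neg hqt, eLpNorm_eq_lintegral_rpow_enorm_toReal hq0 hqt]
      congr 1
      apply lintegral_congr
      intro t
      rw [Real.enorm_eq_ofReal (hF0 t)]
  have hFq : MemLp F q volume := ⟨hFaesm, by rw [← hFeq]; exact hyLq⟩
  -- Integrability of s ↦ T t s (y s) on Ioc τ t
  have hIntT : ∀ t, τ ≤ t → IntegrableOn (fun s => T t s (y s)) (Ioc τ t) volume := by
    intro t ht
    haveI : IsFiniteMeasure (volume.restrict (Ioc τ t)) :=
      ⟨by rw [Measure.restrict_apply_univ]; exact measure_Ioc_lt_top⟩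
    have hFint : IntegrableOn F (Ioc τ t) volume := (hFq.restrict _).integrable hq
    have haesm := evol_aestronglyMeasurable_comp T hContB hymeas τ t ht
    apply Integrable.mono' (hFint.const_mul (max K 0 * Real.exp (|c| * (t - τ)))) haesm
    rw [ae_restrict_iff' measurableSet_Ioc]
    apply ae_of_all
    intro s hs
    have h1 : ‖T t s (y s)‖ ≤ N t (T t s (y s)) := hN₁ _ _
    have h2 := hBd s t (y s) hs.2
    have h3 : K * Real.exp (c * (t - s)) * F s
        ≤ max K 0 * Real.exp (|c| * (t - τ)) * F s := by
      apply mul_le_mul_of_nonneg_right _ (hF0 s)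
      have hexp : Real.exp (c * (t - s)) ≤ Real.exp (|c| * (t - τ)) := by
        apply Real.exp_le_exp.mpr
        have h4 : c * (t - s) ≤ |c| * (t - s) :=
          mul_le_mul_of_nonneg_right (le_abs_self c) (by linarith [hs.2])
        have h5 : |c| * (t - s) ≤ |c| * (t - τ) :=
          mul_le_mul_of_nonneg_left (by linarith [hs.1]) (abs_nonneg c)
        linarith
      calc K * Real.exp (c * (t - s))
          ≤ max K 0 * Real.exp (c * (t - s)) :=
            mul_le_mul_of_nonneg_right (le_max_left _ _) (Real.exp_pos _).le
        _ ≤ max K 0 * Real.exp (|c| * (t - τ)) :=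
            mul_le_mul_of_nonneg_left hexp (le_max_right K 0)
    have h2' : N t (T t s (y s)) ≤ K * Real.exp (c * (t - s)) * F s := h2
    linarith
  -- Integrability of g on Ioi τ
  have hgInt : IntegrableOn g (Ioi τ) volume := by
    set q' : ℝ≥0∞ := (1 - q⁻¹)⁻¹ with hq'def
    have hconj : 1 / (1 : ℝ≥0∞) = 1 / q' + 1 / q := by
      have hqinv : q⁻¹ ≤ 1 := ENNReal.inv_le_one.mpr hq
      rw [one_div, one_div, one_div, hq'def, inv_inv, inv_one,
        tsub_add_cancel_of_le hqinv]
    set φ : ℝ → ℝ := fun s => Real.exp (-b * (s - τ)) with hφdef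
    have hφcont : Continuous φ := by
      rw [hφdef]; fun_prop
    have hφq' : MemLp φ q' (volume.restrict (Ioi τ)) := by
      by_cases hq1 : q = 1
      · have hq'top : q' = ∞ := by rw [hq'def, hq1]; simp
        rw [hq'top]
        apply memLp_top_of_bound hφcont.aestronglyMeasurable.restrict 1
        rw [ae_restrict_iff' measurableSet_Ioi]
        apply ae_of_all
        intro s hs
        rw [hφdef, Real.norm_eq_abs, abs_of_pos (Real.exp_pos _)]
        apply Real.exp_le_one_iff.mpr
        have : τ < s := hs
        nlinarith
      · have hq1' : 1 < q := lt_of_le_of_ne hq (Ne.symm hq1)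
        have hinvlt : q⁻¹ < 1 := ENNReal.inv_lt_one.mpr hq1'
        have hq'ne_top : q' ≠ ∞ := by
          rw [hq'def]
          simpa [ENNReal.inv_ne_top] using (tsub_pos_of_lt hinvlt).ne'
        have hq'ne0 : q' ≠ 0 := by
          rw [hq'def]
          simpa [ENNReal.inv_ne_zero] using (lt_of_le_of_lt tsub_le_self ENNReal.one_lt_top).ne
        set r : ℝ := q'.toReal with hrdef
        have hr : 0 < r := ENNReal.toReal_pos hq'ne0 hq'ne_top
        constructor
        · exact hφcont.aestronglyMeasurable.restrict
        · rw [eLpNorm_eq_lintegral_rpow_enorm_toReal hq'ne0 hq'ne_top]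
          have hint : Integrable (fun s => Real.exp (b * r * τ) * Real.exp (-(b * r) * s))
              (volume.restrict (Ioi τ)) :=
            (exp_neg_integrableOn_Ioi τ (mul_pos hb hr)).const_mul _
          have hlt : (∫⁻ s in Ioi τ, ‖φ s‖ₑ ^ r) < ∞ := by
            have heq : ∀ s : ℝ, ‖φ s‖ₑ ^ r
                = ENNReal.ofReal (Real.exp (b * r * τ) * Real.exp (-(b * r) * s)) := by
              intro s
              rw [hφdef]
              rw [Real.enorm_eq_ofReal (Real.exp_pos _).le,
                ENNReal.ofReal_rpow_of_pos (Real.exp_pos _),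
                ← Real.exp_mul, ← Real.exp_add]
              congr 1
              ring
            calc (∫⁻ s in Ioi τ, ‖φ s‖ₑ ^ r)
                = ∫⁻ s in Ioi τ, ENNReal.ofReal
                    (Real.exp (b * r * τ) * Real.exp (-(b * r) * s)) := by
                  apply lintegral_congr; intro s; exact heq s
              _ < ∞ := hint.lintegral_lt_top
          exact ENNReal.rpow_lt_top_of_nonneg (by positivity) hlt.ne
    have hF_Ioi : MemLp F q (volume.restrict (Ioi τ)) := hFq.restrict _
    have hmul : Integrable (φ • F) (volume.restrict (Ioi τ)) :=
      memLp_one_iff_integrable.mp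
        (haveI : ENNReal.HolderTriple q' q 1 := ⟨by simpa only [one_div] using hconj.symm⟩
         MemLp.smul hF_Ioi hφq')
    apply Integrable.mono' (hmul.const_mul D) (hmeas₂ τ).restrict
    rw [ae_restrict_iff' measurableSet_Ioi]
    apply ae_of_all
    intro s hs
    have h1 : ‖g s‖ ≤ N τ (g s) := hN₁ _ _
    have h2 := hEst2 τ s (y s) (le_of_lt hs)
    have h3 : D * (φ • F) s = D * Real.exp (-b * (s - τ)) * N s (y s) := by
      simp only [Pi.smul_apply', smul_eq_mul, hφdef, hFdef]
      ring
    rw [h3]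
    exact h1.trans h2
  -- pointwise algebraic identity
  have hptwise : ∀ {s t : ℝ}, τ ≤ s → s ≤ t → ∀ v : X,
      S τ t (T t s v - P t (T t s v)) = S τ s (v - P s v) := by
    intro s t hτs hst v
    have hpp : P s (P s v) = P s v := by
      have := DFunLike.congr_fun (hProj s) v
      simpa using this
    have h1 : P s (v - P s v) = 0 := by
      rw [map_sub, hpp, sub_self]
    have h3 : ∀ w, P t (T t s w) = T t s (P s w) := by
      intro w
      have := DFunLike.congr_fun (hComm s t hst) w
      simpa using this
    set w : X := S τ s (v - P s v) with hw
    have h2 : T t s (v - P s v) = T t τ w := by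
      conv_lhs => rw [← hInv1 τ s hτs v]
      rw [hCoc τ s t hτs hst]
    have h4 : T t s v - P t (T t s v) = T t τ w := by
      rw [h3, ← map_sub, h2]
    have h5 : P t (T t τ w) = 0 := by
      rw [← h2, h3, h1, map_zero]
    rw [h4]
    have h6 : T t τ w = T t τ w - P t (T t τ w) := by rw [h5, sub_zero]
    rw [h6, hInv2 τ t (hτs.trans hst) w, hP0 τ s hτs v, sub_zero]
  -- main identity
  have hmain : ∀ t, τ ≤ t →
      S τ t (x t - P t (x t)) = (x τ - P τ (x τ)) + ∫ s in Ioc τ t, g s := by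
    intro t ht
    set L : X →L[ℝ] X := (S τ t).comp (ContinuousLinearMap.id ℝ X - P t) with hLdef
    have hL : ∀ u, L u = S τ t (u - P t u) := by
      intro u; simp [hLdef]
    calc S τ t (x t - P t (x t)) = L (x t) := (hL _).symm
      _ = L (T t τ (x τ)) + L (∫ s in Ioc τ t, T t s (y s)) := by
          rw [hsol τ t ht, map_add]
      _ = (x τ - P τ (x τ)) + ∫ s in Ioc τ t, g s := by
          congr 1
          · rw [hL]; exact hInv2 τ t ht (x τ)
          · rw [← ContinuousLinearMap.integral_comp_comm L (hIntT t ht)]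
            apply setIntegral_congr_fun measurableSet_Ioc
            intro s hs
            show L (T t s (y s)) = g s
            rw [hL]
            exact hptwise hs.1.le hs.2 (y s)
  -- limits
  have hA : Tendsto (fun t => S τ t (x t - P t (x t))) atTop (𝓝 0) := by
    have hbound : Tendsto (fun t => D * M * Real.exp (-b * (t - τ))) atTop (𝓝 0) := by
      have h0 : Tendsto (fun t : ℝ => b * (t - τ)) atTop atTop :=
        Tendsto.const_mul_atTop hb (tendsto_atTop_add_const_right _ _ tendsto_id)
      have h1 : Tendsto (fun t : ℝ => -b * (t - τ)) atTop atBot := by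
        have := tendsto_neg_atTop_atBot.comp h0
        simpa [Function.comp_def, neg_mul] using this
      have h2 := Real.tendsto_exp_atBot.comp h1
      have h3 := h2.const_mul (D * M)
      simpa [Function.comp] using h3
    apply squeeze_zero_norm' _ hbound
    filter_upwards [eventually_ge_atTop τ] with t ht
    calc ‖S τ t (x t - P t (x t))‖ ≤ N τ (S τ t (x t - P t (x t))) := hN₁ _ _
      _ ≤ D * Real.exp (-b * (t - τ)) * N t (x t) := hEst2 τ t (x t) ht
      _ ≤ D * M * Real.exp (-b * (t - τ)) := by
          have hkey := mul_nonneg (mul_nonneg hD.le (Real.exp_pos (-b * (t - τ))).le)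
            (sub_nonneg.mpr (hM t))
          nlinarith [hkey]
  have hB : Tendsto (fun t => ∫ s in Ioc τ t, g s) atTop (𝓝 (∫ s in Ioi τ, g s)) := by
    have h := intervalIntegral_tendsto_integral_Ioi τ hgInt tendsto_id
    apply h.congr'
    filter_upwards [eventually_ge_atTop τ] with t ht
    simp only [id_eq]
    rw [intervalIntegral.integral_of_le ht]
  have hC := hA.sub hB
  have hD' : Tendsto (fun _ : ℝ => x τ - P τ (x τ)) atTop (𝓝 (0 - ∫ s in Ioi τ, g s)) := by
    apply hC.congr'
    filter_upwards [eventually_ge_atTop τ] with t ht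
    rw [hmain t ht, add_sub_cancel_right]
  have hfinal := tendsto_nhds_unique tendsto_const_nhds hD'
  rw [hfinal, zero_sub]
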